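/- In a DAG, if every path between vertices S and Y is blocked by a set W in the graph G with edge T → Y removed, and additionally every path from S to Y in G passing through the edge T → Y contains T as a collider or as a non-collider in W, then a path-based case analysis yields: every path between S and Y in G that avoids the edge T → Y is blocked by W in G whenever the descendant sets of all colliders on such paths are the same in G and G minus the edge T → Y. -/

import Mathlib

variable {V : Type*}

/-- A relation is a DAG edge relation if it has no directed cycles of positive length. -/
def IsDAG (E : V → V → Prop) : Prop := ∀ v, ¬ Relation.TransGen E v v

/-- Adjacency: an edge in either orientation. -/
def EdgeAdj (E : V → V → Prop) (a b : V) : Prop := E a b ∨ E b a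

/-- A (possibly undirected) path: a list of distinct vertices with consecutive vertices adjacent. -/
def PathOn (E : V → V → Prop) (p : List V) : Prop :=
  p.Chain' (EdgeAdj E) ∧ p.Nodup

/-- `DescOf E v u` : `u` is a descendant of `v` (directed path of length ≥ 0). -/
def DescOf (E : V → V → Prop) (v u : V) : Prop := Relation.ReflTransGen E v u

/-- Pearl's blocking criterion: a path is blocked by `W` if some non-collider inner vertex
is in `W`, or some collider has neither itself nor any descendant in `W`. -/
def BlockedBy (E : V → V → Prop) (W : Set V) (p : List V) : Prop :=
  (∃ a b c, [a, b, c] <:+: p ∧ ¬(E a b ∧ E c b) ∧ b ∈ W) ∨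
  (∃ a b c, [a, b, c] <:+: p ∧ E a b ∧ E c b ∧ ∀ d, DescOf E b d → d ∉ W)

/-- d-separation: every path between `u` and `v` is blocked by `W`. -/
def DSep (E : V → V → Prop) (W : Set V) (u v : V) : Prop :=
  ∀ p : List V, PathOn E p → p.head? = some u → p.getLast? = some v → BlockedBy E W p

/-- d-connection: some path between `u` and `v` is not blocked by `W`. -/
def DConn (E : V → V → Prop) (W : Set V) (u v : V) : Prop :=
  ∃ p : List V, PathOn E p ∧ p.head? = some u ∧ p.getLast? = some v ∧ ¬ BlockedBy E W p

lemma chain'_mono_infix {R R' : V → V → Prop} :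
    ∀ p : List V, (∀ a b, [a, b] <:+: p → R a b → R' a b) → p.Chain' R → p.Chain' R'
  | [], _, _ => List.isChain_nil
  | [_], _, _ => List.isChain_singleton _
  | x :: y :: rest, hab, hch => by
      simp only [List.Chain', List.isChain_cons_cons] at hch ⊢
      refine ⟨hab x y ⟨[], rest, rfl⟩ hch.1, chain'_mono_infix (y :: rest) ?_ hch.2⟩
      intro a b hinf
      exact hab a b (hinf.trans ⟨[x], [], by simp⟩)

/-- suppose every path between S and Y is blocked by W in the graph with the
edge T → Y removed, and every path from S to Y in G passing through the edge T → Y contains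
T as a collider or as a non-collider in W. Then every path between S and Y in G that avoids
the edge T → Y is blocked by W in G, whenever the descendant sets of all colliders on such
paths are the same in G and in G minus the edge T → Y. -/
theorem stmt11 {V : Type*} (E : V → V → Prop) (h : IsDAG E) (S T Y : V) (hTY : E T Y)
    (E' : V → V → Prop) (hE' : ∀ a b, E' a b ↔ E a b ∧ ¬(a = T ∧ b = Y))
    (W : Set V)
    (h1 : DSep E' W S Y)
    (h2 : ∀ p : List V, PathOn E p → p.head? = some S → p.getLast? = some Y →
      ([T, Y] <:+: p ∨ [Y, T] <:+: p) →
      ((∃ a c, [a, T, c] <:+: p ∧ E a T ∧ E c T) ∨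
       (∃ a c, [a, T, c] <:+: p ∧ ¬(E a T ∧ E c T) ∧ T ∈ W))) :
    ∀ p : List V, PathOn E p → p.head? = some S → p.getLast? = some Y →
      ¬ [T, Y] <:+: p → ¬ [Y, T] <:+: p →
      (∀ a b c, [a, b, c] <:+: p → E a b → E c b → ∀ x, DescOf E b x ↔ DescOf E' b x) →
      BlockedBy E W p := by
  intro p hp hhead hlast hTYp hYTp hdesc
  have hpair : ∀ a b, [a, b] <:+: p → EdgeAdj E a b → EdgeAdj E' a b := by
    intro a b hinf hab
    rcases hab with hab | hba
    · left; rw [hE']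
      exact ⟨hab, fun ⟨ha, hb⟩ => hTYp (by rw [← ha, ← hb]; exact hinf)⟩
    · right; rw [hE']
      exact ⟨hba, fun ⟨hb, ha⟩ => hYTp (by rw [← ha, ← hb]; exact hinf)⟩
  have hp' : PathOn E' p := ⟨chain'_mono_infix p hpair hp.1, hp.2⟩
  have hE'E : ∀ a b, E' a b → E a b := fun a b hab => ((hE' a b).1 hab).1
  rcases h1 p hp' hhead hlast with ⟨a, b, c, hinf, hnc, hbW⟩ | ⟨a, b, c, hinf, hab, hcb, hd⟩
  · left
    refine ⟨a, b, c, hinf, fun ⟨hab, hcb⟩ => hnc ⟨?_, ?_⟩, hbW⟩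
    · rw [hE']
      refine ⟨hab, fun ⟨ha, hb⟩ => hTYp ?_⟩
      rw [← ha, ← hb]
      exact (List.IsInfix.trans ⟨[], [c], rfl⟩ hinf)
    · rw [hE']
      refine ⟨hcb, fun ⟨hc, hb⟩ => hYTp ?_⟩
      rw [← hc, ← hb]
      exact (List.IsInfix.trans ⟨[a], [], by simp⟩ hinf)
  · right
    refine ⟨a, b, c, hinf, hE'E a b hab, hE'E c b hcb, fun d hdesc' => ?_⟩
    exact hd d ((hdesc a b c hinf (hE'E a b hab) (hE'E c b hcb) d).1 hdesc')
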